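/- For every c > 0, E_Z[(S(cZ) − 1) Z] > 0; equivalently, g(c, 1) < 0. -/

import Mathlib

open MeasureTheory ProbabilityTheory

/-- The logistic sigmoid `S(t) = 1/(1 + exp(-t))`. -/
noncomputable def S (t : ℝ) : ℝ := 1 / (1 + Real.exp (-t))

/-- The standard Gaussian measure on `ℝ`. -/
noncomputable def γ : Measure ℝ := gaussianReal 0 1

/-- The validation mean `μᵥ(s) := √(2(1 - s²))`. -/
noncomputable def μv (s : ℝ) : ℝ := Real.sqrt (2 * (1 - s ^ 2))

/-- `g(c, s) := -E_Z[(S(c(μᵥ(s) + s Z)) - 1)(μᵥ(s) + s Z)]` for a standard Gaussian `Z`. -/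
noncomputable def g (c s : ℝ) : ℝ :=
  -∫ z, (S (c * (μv s + s * z)) - 1) * (μv s + s * z) ∂γ

/-- `σ₀(c) := sup { s ∈ [0,1] : g(c, s) ≥ 0 }`. -/
noncomputable def σ₀ (c : ℝ) : ℝ := sSup {s : ℝ | s ∈ Set.Icc (0 : ℝ) 1 ∧ 0 ≤ g c s}

lemma S_pos (t : ℝ) : 0 < S t := by
  unfold S
  positivity

lemma S_lt_one (t : ℝ) : S t < 1 := by
  unfold S
  rw [div_lt_one (by positivity)]
  linarith [Real.exp_pos (-t)]

lemma S_neg (t : ℝ) : S (-t) = 1 - S t := by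
  unfold S
  have h1 : (0:ℝ) < 1 + Real.exp (-t) := by positivity
  have h2 : (0:ℝ) < 1 + Real.exp t := by positivity
  rw [neg_neg]
  field_simp
  rw [add_sub_cancel_left, add_mul, one_mul, ← Real.exp_add, add_neg_cancel, Real.exp_zero]
  ring

lemma half_lt_S {t : ℝ} (ht : 0 < t) : 1/2 < S t := by
  unfold S
  rw [div_lt_div_iff₀ (by norm_num) (by positivity)]
  have : Real.exp (-t) < 1 := Real.exp_lt_one_iff.mpr (by linarith)
  linarith

lemma S_continuous : Continuous S := by
  unfold S
  exact continuous_const.div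
    (continuous_const.add (Real.continuous_exp.comp continuous_neg))
    (fun t => by positivity)

/-- For every `c > 0`, `E_Z[(S(cZ) - 1) Z] > 0`; equivalently, `g(c, 1) < 0`. -/
theorem stmt9 (c : ℝ) (hc : 0 < c) :
    (0 < ∫ z, (S (c * z) - 1) * z ∂γ) ∧ g c 1 < 0 := by
  set f : ℝ → ℝ := fun z => (S (c * z) - 1) * z with hf
  haveI : IsProbabilityMeasure γ := by rw [γ]; infer_instance
  have hfc : Continuous f :=
    ((S_continuous.comp (continuous_const.mul continuous_id)).sub continuous_const).mul
      continuous_id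
  -- integrability of identity
  have hγ : γ = MeasureTheory.volume.withDensity (gaussianPDF 0 1) := by
    rw [γ, gaussianReal_of_var_ne_zero 0 one_ne_zero]
  have hid : Integrable (fun z : ℝ => z) γ := by
    rw [hγ, integrable_withDensity_iff (measurable_gaussianPDF 0 1)
      (Filter.Eventually.of_forall fun x => ENNReal.ofReal_lt_top)]
    have hbase : Integrable (fun x : ℝ => (Real.sqrt (2 * Real.pi * 1))⁻¹ *
        (x * Real.exp (-(1/2) * x ^ 2))) :=
      (integrable_mul_exp_neg_mul_sq (by norm_num : (0:ℝ) < 1/2)).const_mul _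
    refine hbase.congr (Filter.Eventually.of_forall fun x => ?_)
    simp only [gaussianPDF_def]
    rw [ENNReal.toReal_ofReal (gaussianPDFReal_nonneg 0 1 x), gaussianPDFReal]
    push_cast
    ring_nf
  -- integrability of f
  have hf_int : Integrable f γ := by
    refine hid.mono hfc.aestronglyMeasurable (Filter.Eventually.of_forall fun z => ?_)
    simp only [hf, norm_mul, Real.norm_eq_abs]
    have h1 : |S (c * z) - 1| ≤ 1 := by
      rw [abs_le]
      constructor <;> nlinarith [S_pos (c * z), S_lt_one (c * z)]
    nlinarith [abs_nonneg z, abs_nonneg (S (c*z) - 1)]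
  -- symmetry of the Gaussian
  have hmap : Measure.map (fun x : ℝ => -x) γ = γ := by
    have h := gaussianReal_map_const_mul (μ := 0) (v := 1) (-1)
    have h2 : NNReal.mk ((-1:ℝ)^2) (sq_nonneg _) = 1 := by ext; norm_num
    rw [h2] at h
    simpa [γ, neg_one_mul] using h
  have hfneg_int : Integrable (fun z => f (-z)) γ := by
    have h1 : Integrable f (Measure.map (fun x : ℝ => -x) γ) := by rw [hmap]; exact hf_int
    exact (integrable_map_measure hfc.aestronglyMeasurable
      measurable_neg.aemeasurable).mp h1
  have hneg : ∫ z, f z ∂γ = ∫ z, f (-z) ∂γ := by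
    conv_lhs => rw [← hmap]
    rw [integral_map measurable_neg.aemeasurable hfc.aestronglyMeasurable]
  -- the symmetrized integrand
  have h_eq : ∀ z : ℝ, f z + f (-z) = z * (2 * S (c * z) - 1) := by
    intro z
    simp only [hf]
    have : S (c * -z) = 1 - S (c * z) := by rw [show c * -z = -(c*z) by ring, S_neg]
    rw [this]; ring
  have h_nonneg : (0:ℝ → ℝ) ≤ fun z => f z + f (-z) := by
    intro z
    show (0:ℝ) ≤ f z + f (-z)
    rw [h_eq]
    rcases lt_trichotomy z 0 with hz | hz | hz
    · have : S (c * z) < 1/2 := by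
        have := half_lt_S (t := -(c*z)) (by nlinarith)
        rw [show -(c*z) = c * -z by ring, show c * -z = -(c*z) by ring, S_neg] at this
        linarith
      nlinarith
    · simp [hz]
    · have := half_lt_S (mul_pos hc hz)
      nlinarith
  have h_pos : ∀ z : ℝ, z ≠ 0 → 0 < f z + f (-z) := by
    intro z hz
    rw [h_eq]
    rcases hz.lt_or_gt with hz | hz
    · have : S (c * z) < 1/2 := by
        have := half_lt_S (t := -(c*z)) (by nlinarith)
        rw [show -(c*z) = c * -z by ring, show c * -z = -(c*z) by ring, S_neg] at this
        linarith
      nlinarith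
    · have := half_lt_S (mul_pos hc hz)
      nlinarith
  have h_int : Integrable (fun z => f z + f (-z)) γ := hf_int.add hfneg_int
  -- positivity of the symmetrized integral
  have hpos : 0 < ∫ z, (f z + f (-z)) ∂γ := by
    rw [integral_pos_iff_support_of_nonneg h_nonneg h_int]
    have hsub : ({0}ᶜ : Set ℝ) ⊆ Function.support fun z => f z + f (-z) := by
      intro z hz
      exact (h_pos z hz).ne'
    refine lt_of_lt_of_le ?_ (measure_mono hsub)
    have h0 : γ ({0} : Set ℝ) = 0 := by
      rw [hγ]
      exact withDensity_absolutelyContinuous _ _ (measure_singleton 0)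
    rw [measure_compl (measurableSet_singleton 0) (measure_ne_top _ _), h0, measure_univ]
    simp
  rw [integral_add hf_int hfneg_int, ← hneg] at hpos
  have hmain : 0 < ∫ z, f z ∂γ := by linarith
  refine ⟨hmain, ?_⟩
  have hμv : μv 1 = 0 := by simp [μv]
  have : g c 1 = -∫ z, f z ∂γ := by
    simp only [g, hμv, zero_add, one_mul, hf]
  rw [this]
  linarith
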